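/- arXiv:2004.00083 — 4 statements merged into one kernel-verified Lean document; each statement's English description precedes it below -/
import Mathlib

section
/- For every γ > 0 the DC envelope φ_γ = g^γ − h^γ is differentiable on ℝ^p with gradient ∇φ_γ = (1/γ)(prox_{γh} − prox_{γg}), and ∇φ_γ is Lipschitz continuous with modulus 1/γ. -/
open scoped InnerProductSpace
noncomputable section

/-- `ℝ^p` as a Euclidean space. -/
abbrev Euc (p : ℕ) := EuclideanSpace ℝ (Fin p)

variable {p : ℕ}

/-- `f : ℝ^p → ℝ ∪ {∞}` (modelled with `EReal` values never equal to `-∞`) is proper. -/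
def ProperFun (f : Euc p → EReal) : Prop :=
  (∀ x, f x ≠ ⊥) ∧ (∃ x, f x ≠ ⊤)

/-- Convexity for extended-real-valued functions. -/
def ConvexFun (f : Euc p → EReal) : Prop :=
  ∀ x y : Euc p, ∀ t : ℝ, 0 ≤ t → t ≤ 1 →
    f (t • x + (1 - t) • y) ≤ (t : EReal) * f x + ((1 - t : ℝ) : EReal) * f y

/-- The convex subdifferential `∂f(x)`. -/
def Subdiff (f : Euc p → EReal) (x : Euc p) : Set (Euc p) :=
  {v | ∀ z, f x + ((⟪v, z - x⟫_ℝ : ℝ) : EReal) ≤ f z}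

/-- `u` minimizes `w ↦ f(w) + (1/(2γ))‖w − x‖²`. -/
def ProxObjMin (f : Euc p → EReal) (γ : ℝ) (x u : Euc p) : Prop :=
  ∀ w, f u + ((1/(2*γ) * ‖u - x‖^2 : ℝ) : EReal) ≤ f w + ((1/(2*γ) * ‖w - x‖^2 : ℝ) : EReal)

/-- `u = prox_{γf}(x)`: `u` is the unique minimizer of `w ↦ f(w) + (1/(2γ))‖w − x‖²`. -/
def IsProxOf (f : Euc p → EReal) (γ : ℝ) (x u : Euc p) : Prop :=
  ProxObjMin f γ x u ∧ ∀ w, ProxObjMin f γ x w → w = u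

/-- The Moreau envelope `f^γ(x) = inf_w { f(w) + (1/(2γ))‖w − x‖² }`, as an extended real. -/
def moreau (f : Euc p → EReal) (γ : ℝ) (x : Euc p) : EReal :=
  ⨅ w : Euc p, f w + ((1/(2*γ) * ‖w - x‖^2 : ℝ) : EReal)

/-- The (real-valued) Moreau envelope. -/
def moreauR (f : Euc p → EReal) (γ : ℝ) (x : Euc p) : ℝ := (moreau f γ x).toReal

/-- The DC envelope `φ_γ = g^γ − h^γ`. -/
def dce (g h : Euc p → EReal) (γ : ℝ) (s : Euc p) : ℝ := moreauR g γ s - moreauR h γ s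

/-- The DC function `φ = g − h`, with the convention `∞ − ∞ = ∞`. -/
def dcVal (g h : Euc p → EReal) (x : Euc p) : EReal :=
  if g x = ⊤ then ⊤ else g x - h x

-- finiteness of f at a prox point
lemma proxMin_finite {f : Euc p → EReal} (hf : ProperFun f) {γ : ℝ} {s u : Euc p}
    (hmin : ProxObjMin f γ s u) : f u = ((f u).toReal : EReal) := by
  obtain ⟨hbot, w0, hw0⟩ := hf
  have h := hmin w0
  have htop : f u ≠ ⊤ := by
    intro hT
    rw [hT] at h
    have : (⊤ : EReal) + ((1/(2*γ) * ‖u - s‖^2 : ℝ) : EReal) = ⊤ := by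
      exact EReal.top_add_of_ne_bot (by exact_mod_cast EReal.coe_ne_bot _)
    rw [this, top_le_iff] at h
    exact absurd h (EReal.add_lt_top hw0 (EReal.coe_ne_top _)).ne
  exact (EReal.coe_toReal htop (hbot u)).symm

-- moreau value at prox point
lemma moreau_eq_prox {f : Euc p → EReal} {γ : ℝ} {s u : Euc p}
    (hmin : ProxObjMin f γ s u) :
    moreau f γ s = f u + ((1/(2*γ) * ‖u - s‖^2 : ℝ) : EReal) :=
  le_antisymm (iInf_le _ u) (le_iInf hmin)

lemma moreauR_eq_prox {f : Euc p → EReal} (hf : ProperFun f) {γ : ℝ} {s u : Euc p}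
    (hmin : ProxObjMin f γ s u) :
    moreauR f γ s = (f u).toReal + 1/(2*γ) * ‖u - s‖^2 := by
  have hfin := proxMin_finite hf hmin
  rw [moreauR, moreau_eq_prox hmin, hfin]
  rw [← EReal.coe_add]
  exact EReal.toReal_coe _

-- the variational inequality
lemma prox_varineq {f : Euc p → EReal} (hf : ProperFun f) (hconv : ConvexFun f)
    {γ : ℝ} (hγ : 0 < γ) {s u : Euc p} (hmin : ProxObjMin f γ s u)
    {w : Euc p} (hw : f w ≠ ⊤) :
    ⟪s - u, w - u⟫_ℝ ≤ γ * ((f w).toReal - (f u).toReal) := by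
  set A := (f u).toReal with hAdef
  set B := (f w).toReal with hBdef
  have hA : f u = (A : EReal) := proxMin_finite hf hmin
  have hB : f w = (B : EReal) := (EReal.coe_toReal hw (hf.1 w)).symm
  -- per-t inequality
  have key : ∀ t : ℝ, 0 < t → t ≤ 1 →
      A ≤ B + γ⁻¹ * ⟪u - s, w - u⟫_ℝ + 1/(2*γ) * t * ‖w - u‖^2 := by
    intro t ht0 ht1
    set wt := u + t • (w - u) with hwt
    have hconvt := hconv w u t ht0.le ht1
    have hwteq : t • w + (1 - t) • u = wt := by
      rw [hwt]; module
    rw [hwteq, hA, hB] at hconvt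
    have hRHS : (t : EReal) * (B : EReal) + ((1 - t : ℝ) : EReal) * (A : EReal)
        = ((t * B + (1 - t) * A : ℝ) : EReal) := by
      rw [← EReal.coe_mul, ← EReal.coe_mul, ← EReal.coe_add]
    rw [hRHS] at hconvt
    -- f wt is finite
    have hwt_ne_top : f wt ≠ ⊤ := fun hT => by
      rw [hT] at hconvt; exact EReal.coe_ne_top _ (top_le_iff.mp hconvt)
    set F := (f wt).toReal with hFdef
    have hF : f wt = (F : EReal) := (EReal.coe_toReal hwt_ne_top (hf.1 wt)).symm
    rw [hF] at hconvt
    have hFle : F ≤ t * B + (1 - t) * A := by exact_mod_cast hconvt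
    have hm := hmin wt
    rw [hA, hF] at hm
    have hm' : A + 1/(2*γ) * ‖u - s‖^2 ≤ F + 1/(2*γ) * ‖wt - s‖^2 := by
      exact_mod_cast hm
    -- norm expansion
    have hnorm : ‖wt - s‖^2 = ‖u - s‖^2 + 2 * t * ⟪u - s, w - u⟫_ℝ + t^2 * ‖w - u‖^2 := by
      have : wt - s = (u - s) + t • (w - u) := by rw [hwt]; abel
      rw [this, @norm_add_sq_real, real_inner_smul_right, norm_smul, Real.norm_eq_abs,
        abs_of_pos ht0, mul_pow]
      ring
    rw [hnorm] at hm'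
    have hγ' : (0:ℝ) < 2 * γ := by linarith
    have h1 : t * A ≤ t * B + 1/(2*γ) * (2 * t * ⟪u - s, w - u⟫_ℝ + t^2 * ‖w - u‖^2) := by
      nlinarith [hm', hFle]
    have := mul_le_mul_of_nonneg_left h1 (le_of_lt (inv_pos.mpr ht0))
    have ht0' : t ≠ 0 := ne_of_gt ht0
    calc A = t⁻¹ * (t * A) := by field_simp
      _ ≤ t⁻¹ * (t * B + 1/(2*γ) * (2 * t * ⟪u - s, w - u⟫_ℝ + t^2 * ‖w - u‖^2)) :=
          mul_le_mul_of_nonneg_left h1 (le_of_lt (inv_pos.mpr ht0))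
      _ = B + γ⁻¹ * ⟪u - s, w - u⟫_ℝ + 1/(2*γ) * t * ‖w - u‖^2 := by
          field_simp; ring
  -- limit t → 0
  have hAB : A ≤ B + γ⁻¹ * ⟪u - s, w - u⟫_ℝ := by
    apply le_of_forall_pos_le_add
    intro ε hε
    rcases le_or_gt (1/(2*γ) * ‖w - u‖^2) 0 with hc | hc
    · have := key 1 one_pos le_rfl
      nlinarith
    · set t := min 1 (ε / (1/(2*γ) * ‖w - u‖^2)) with htdef
      have ht0 : 0 < t := lt_min one_pos (div_pos hε hc)
      have := key t ht0 (min_le_left _ _)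
      have hle : 1/(2*γ) * t * ‖w - u‖^2 ≤ ε := by
        have h2 : t ≤ ε / (1/(2*γ) * ‖w - u‖^2) := min_le_right _ _
        calc 1/(2*γ) * t * ‖w - u‖^2 = t * (1/(2*γ) * ‖w - u‖^2) := by ring
          _ ≤ (ε / (1/(2*γ) * ‖w - u‖^2)) * (1/(2*γ) * ‖w - u‖^2) :=
              mul_le_mul_of_nonneg_right h2 hc.le
          _ = ε := div_mul_cancel₀ ε (ne_of_gt hc)
      linarith
  have hinner : ⟪s - u, w - u⟫_ℝ = - ⟪u - s, w - u⟫_ℝ := by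
    rw [← inner_neg_left]; congr 1; abel
  have hγ' : γ ≠ 0 := ne_of_gt hγ
  set I := ⟪u - s, w - u⟫_ℝ with hI
  rw [hinner]
  have heq : γ * (B + γ⁻¹ * I) = γ * B + I := by
    rw [mul_add, ← mul_assoc, mul_inv_cancel₀ hγ', one_mul]
  have h2 := mul_le_mul_of_nonneg_left hAB hγ.le
  rw [heq] at h2
  nlinarith [h2]

-- firm nonexpansiveness (monotonicity form)
lemma prox_firm {f : Euc p → EReal} (hf : ProperFun f) (hconv : ConvexFun f)
    {γ : ℝ} (hγ : 0 < γ) {x y u v : Euc p}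
    (hu : ProxObjMin f γ x u) (hv : ProxObjMin f γ y v) :
    ‖u - v‖^2 ≤ ⟪x - y, u - v⟫_ℝ := by
  have hvfin : f v ≠ ⊤ := fun hT => by
    have := proxMin_finite hf hv; rw [hT] at this
    exact EReal.coe_ne_top _ this.symm
  have hufin : f u ≠ ⊤ := fun hT => by
    have := proxMin_finite hf hu; rw [hT] at this
    exact EReal.coe_ne_top _ this.symm
  have h1 := prox_varineq hf hconv hγ hu hvfin
  have h2 := prox_varineq hf hconv hγ hv hufin
  -- h1 : ⟪x - u, v - u⟫ ≤ γ (f v - f u) ; h2 : ⟪y - v, u - v⟫ ≤ γ (f u - f v)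
  have hsum : ⟪x - u, v - u⟫_ℝ + ⟪y - v, u - v⟫_ℝ ≤ 0 := by linarith
  have e1 : ⟪x - u, v - u⟫_ℝ = -⟪x, u - v⟫_ℝ + ⟪u, u - v⟫_ℝ := by
    rw [show v - u = -(u - v) by abel, inner_neg_right, inner_sub_left]; ring
  have e2 : ⟪y - v, u - v⟫_ℝ = ⟪y, u - v⟫_ℝ - ⟪v, u - v⟫_ℝ := by
    rw [inner_sub_left]
  have e3 : ⟪x - y, u - v⟫_ℝ = ⟪x, u - v⟫_ℝ - ⟪y, u - v⟫_ℝ := by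
    rw [inner_sub_left]
  have e4 : ‖u - v‖^2 = ⟪u, u - v⟫_ℝ - ⟪v, u - v⟫_ℝ := by
    rw [← inner_sub_left, real_inner_self_eq_norm_sq]
  linarith

-- quadratic-error bound implies gradient
lemma hasGradientAt_of_quadratic {e : Euc p → ℝ} {v : Euc p} {s : Euc p} {C : ℝ} (hC : 0 < C)
    (hbound : ∀ x, |e x - e s - ⟪v, x - s⟫_ℝ| ≤ C * ‖x - s‖^2) :
    HasGradientAt e v s := by
  rw [hasGradientAt_iff_isLittleO]
  rw [Asymptotics.isLittleO_iff]
  intro ε hε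
  have hball : Metric.closedBall s (ε / C) ∈ nhds s :=
    Metric.closedBall_mem_nhds s (div_pos hε hC)
  filter_upwards [hball] with x hx
  have hdist : ‖x - s‖ ≤ ε / C := by
    rw [← dist_eq_norm]; exact hx
  have h1 : |e x - e s - ⟪v, x - s⟫_ℝ| ≤ C * ‖x - s‖^2 := hbound x
  have h2 : C * ‖x - s‖^2 ≤ ε * ‖x - s‖ := by
    have := mul_le_mul_of_nonneg_right hdist (norm_nonneg (x - s))
    calc C * ‖x - s‖^2 = C * (‖x - s‖ * ‖x - s‖) := by ring
      _ ≤ C * ((ε / C) * ‖x - s‖) := by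
          exact mul_le_mul_of_nonneg_left this hC.le
      _ = ε * ‖x - s‖ := by field_simp
  calc ‖e x - e s - ⟪v, x - s⟫_ℝ‖ = |e x - e s - ⟪v, x - s⟫_ℝ| := rfl
    _ ≤ ε * ‖x - s‖ := le_trans h1 h2

-- gradient of the Moreau envelope
lemma moreau_hasGradientAt {f : Euc p → EReal} (hf : ProperFun f) (hconv : ConvexFun f)
    {γ : ℝ} (hγ : 0 < γ) (P : Euc p → Euc p) (hP : ∀ s, ProxObjMin f γ s (P s)) (s : Euc p) :
    HasGradientAt (moreauR f γ) (γ⁻¹ • (s - P s)) s := by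
  have hγ' : γ ≠ 0 := ne_of_gt hγ
  set c : ℝ := 1/(2*γ) with hc
  have hc0 : 0 < c := by positivity
  set A : Euc p → ℝ := fun x => (f (P x)).toReal with hA
  have hmR : ∀ x, moreauR f γ x = A x + c * ‖P x - x‖^2 := fun x =>
    moreauR_eq_prox hf (hP x)
  apply hasGradientAt_of_quadratic (C := 5 * c) (by positivity)
  intro x
  set u := P s with hu
  set ux := P x with hux
  have hγc : γ⁻¹ = 2 * c := by rw [hc]; field_simp
  have hv : ∀ z : Euc p, ⟪γ⁻¹ • (s - u), z⟫_ℝ = 2 * c * ⟪s - u, z⟫_ℝ := by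
    intro z
    rw [real_inner_smul_left, hγc]
  -- moreau at x is below the value at u
  have hub : moreauR f γ x ≤ A s + c * ‖u - x‖^2 := by
    have h := hP x u
    rw [proxMin_finite hf (hP x), proxMin_finite hf (hP s)] at h
    have : A x + c * ‖ux - x‖^2 ≤ A s + c * ‖u - x‖^2 := by exact_mod_cast h
    rw [hmR x]; linarith
  have hlb : moreauR f γ s ≤ A x + c * ‖ux - s‖^2 := by
    have h := hP s ux
    rw [proxMin_finite hf (hP x), proxMin_finite hf (hP s)] at h
    have : A s + c * ‖u - s‖^2 ≤ A x + c * ‖ux - s‖^2 := by exact_mod_cast h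
    rw [hmR s]; linarith
  -- norm expansions
  have hexp1 : c * ‖u - x‖^2
      = c * ‖u - s‖^2 + 2 * c * ⟪u - s, s - x⟫_ℝ + c * ‖s - x‖^2 := by
    have h : u - x = (u - s) + (s - x) := by abel
    rw [h, @norm_add_sq_real]; ring
  have hexp2 : c * ‖ux - s‖^2
      = c * ‖ux - x‖^2 + 2 * c * ⟪ux - x, x - s⟫_ℝ + c * ‖x - s‖^2 := by
    have h : ux - s = (ux - x) + (x - s) := by abel
    rw [h, @norm_add_sq_real]; ring
  -- nonexpansiveness of P
  have hfirm := prox_firm hf hconv hγ (hP x) (hP s)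
  have hnonexp : ‖ux - u‖ ≤ ‖x - s‖ := by
    rcases eq_or_ne ux u with hequ | hne
    · rw [hequ]; simp [norm_nonneg]
    · have hpos : 0 < ‖ux - u‖ := by
        rw [norm_pos_iff]; exact sub_ne_zero_of_ne hne
      have hcs : ⟪x - s, ux - u⟫_ℝ ≤ ‖x - s‖ * ‖ux - u‖ := real_inner_le_norm _ _
      nlinarith [hfirm, hcs]
  have hcn : (0:ℝ) ≤ c * ‖x - s‖^2 := by positivity
  rw [abs_le, hv (x - s)]
  constructor
  · -- lower bound
    have h1 : moreauR f γ x - moreauR f γ s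
        ≥ 2*c*⟪x - ux, x - s⟫_ℝ - c*‖x - s‖^2 := by
      rw [hmR x]
      have hneg : ⟪ux - x, x - s⟫_ℝ = - ⟪x - ux, x - s⟫_ℝ := by
        rw [show ux - x = -(x - ux) by abel, inner_neg_left]
      rw [hneg] at hexp2
      linarith [hlb]
    have h3 : ⟪x - ux, x - s⟫_ℝ - ⟪s - u, x - s⟫_ℝ
        = ⟪(x - s) - (ux - u), x - s⟫_ℝ := by
      rw [← inner_sub_left]; congr 1; abel
    have h4 : ⟪(x - s) - (ux - u), x - s⟫_ℝ ≥ ‖x - s‖^2 - ‖ux - u‖ * ‖x - s‖ := by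
      rw [inner_sub_left, real_inner_self_eq_norm_sq]
      linarith [real_inner_le_norm (ux - u) (x - s)]
    have h5 : ‖ux - u‖ * ‖x - s‖ ≤ ‖x - s‖^2 := by
      nlinarith [hnonexp, norm_nonneg (x - s)]
    have hJ0 : (0:ℝ) ≤ ⟪x - ux, x - s⟫_ℝ - ⟪s - u, x - s⟫_ℝ := by linarith
    have key : (0:ℝ) ≤ 2*c*(⟪x - ux, x - s⟫_ℝ - ⟪s - u, x - s⟫_ℝ) :=
      mul_nonneg (by positivity) hJ0
    have hdist : 2*c*(⟪x - ux, x - s⟫_ℝ - ⟪s - u, x - s⟫_ℝ)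
        = 2*c*⟪x - ux, x - s⟫_ℝ - 2*c*⟪s - u, x - s⟫_ℝ := by ring
    rw [hdist] at key
    linarith [h1, key, hcn]
  · -- upper bound
    have h1 : moreauR f γ x - moreauR f γ s
        ≤ 2*c*⟪u - s, s - x⟫_ℝ + c*‖s - x‖^2 := by
      rw [hmR s]
      linarith [hub, hexp1]
    have h3 : ⟪u - s, s - x⟫_ℝ = ⟪s - u, x - s⟫_ℝ := by
      rw [show u - s = -(s - u) by abel, show s - x = -(x - s) by abel,
        inner_neg_left, inner_neg_right, neg_neg]
    have h6 : ‖s - x‖^2 = ‖x - s‖^2 := by rw [norm_sub_rev]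
    rw [h3, h6] at h1
    linarith [h1, hcn]

-- difference of two prox maps is nonexpansive
lemma prox_diff_nonexp {g h : Euc p → EReal}
    (hgp : ProperFun g) (hgc : ConvexFun g) (hhp : ProperFun h) (hhc : ConvexFun h)
    {γ : ℝ} (hγ : 0 < γ) {x y ax ay bx by' : Euc p}
    (hax : ProxObjMin g γ x ax) (hay : ProxObjMin g γ y ay)
    (hbx : ProxObjMin h γ x bx) (hby : ProxObjMin h γ y by') :
    ‖(bx - ax) - (by' - ay)‖ ≤ ‖x - y‖ := by
  set d := x - y with hd
  set a := ax - ay with ha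
  set b := bx - by' with hb
  have hfa : ‖a‖^2 ≤ ⟪d, a⟫_ℝ := prox_firm hgp hgc hγ hax hay
  have hfb : ‖b‖^2 ≤ ⟪d, b⟫_ℝ := prox_firm hhp hhc hγ hbx hby
  have key : ∀ z : Euc p, ‖z‖^2 ≤ ⟪d, z⟫_ℝ → ‖(2:ℝ) • z - d‖ ≤ ‖d‖ := by
    intro z hz
    have hsq : ‖(2:ℝ) • z - d‖^2 ≤ ‖d‖^2 := by
      rw [@norm_sub_sq_real, norm_smul, real_inner_smul_left]
      have : ‖(2:ℝ)‖ = 2 := by norm_num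
      rw [this]
      have hcomm : ⟪z, d⟫_ℝ = ⟪d, z⟫_ℝ := real_inner_comm d z
      nlinarith [hz, hcomm]
    exact le_of_pow_le_pow_left₀ two_ne_zero (norm_nonneg d) hsq
  have h2a := key a hfa
  have h2b := key b hfb
  have hbma : (2:ℝ) • (b - a) = ((2:ℝ) • b - d) - ((2:ℝ) • a - d) := by
    rw [smul_sub]; abel
  have h2 : (2:ℝ) * ‖b - a‖ ≤ 2 * ‖d‖ := by
    have : ‖(2:ℝ) • (b - a)‖ = 2 * ‖b - a‖ := by
      rw [norm_smul]; norm_num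
    rw [← this, hbma]
    calc ‖((2:ℝ) • b - d) - ((2:ℝ) • a - d)‖ ≤ ‖(2:ℝ) • b - d‖ + ‖(2:ℝ) • a - d‖ :=
          norm_sub_le _ _
      _ ≤ 2 * ‖d‖ := by linarith
  have : b - a = (bx - ax) - (by' - ay) := by rw [ha, hb]; abel
  rw [← this]; linarith

/-- for every `γ > 0` the DC envelope `φ_γ = g^γ − h^γ` is differentiable with
gradient `∇φ_γ = (1/γ)(prox_{γh} − prox_{γg})`, which is Lipschitz with modulus `1/γ`. -/
theorem statement2
    (g h : Euc p → EReal)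
    (hg_proper : ProperFun g) (hg_convex : ConvexFun g) (hg_lsc : LowerSemicontinuous g)
    (hh_proper : ProperFun h) (hh_convex : ConvexFun h) (hh_lsc : LowerSemicontinuous h)
    (γ : ℝ) (hγ : 0 < γ)
    (proxg proxh : Euc p → Euc p)
    (hproxg : ∀ s, IsProxOf g γ s (proxg s)) (hproxh : ∀ s, IsProxOf h γ s (proxh s)) :
    (∀ s : Euc p, HasGradientAt (dce g h γ) (γ⁻¹ • (proxh s - proxg s)) s) ∧
      LipschitzWith (Real.toNNReal γ⁻¹) (fun s => γ⁻¹ • (proxh s - proxg s)) := by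
  constructor
  · intro s
    have hg := moreau_hasGradientAt hg_proper hg_convex hγ proxg (fun t => (hproxg t).1) s
    have hh := moreau_hasGradientAt hh_proper hh_convex hγ proxh (fun t => (hproxh t).1) s
    rw [hasGradientAt_iff_isLittleO] at hg hh ⊢
    have hdiff := hg.sub hh
    have heq : (fun x' => dce g h γ x' - dce g h γ s
          - ⟪γ⁻¹ • (proxh s - proxg s), x' - s⟫_ℝ)
        = fun x' => (moreauR g γ x' - moreauR g γ s - ⟪γ⁻¹ • (s - proxg s), x' - s⟫_ℝ)
          - (moreauR h γ x' - moreauR h γ s - ⟪γ⁻¹ • (s - proxh s), x' - s⟫_ℝ) := by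
      funext x'
      have hsm : γ⁻¹ • (proxh s - proxg s) = γ⁻¹ • (s - proxg s) - γ⁻¹ • (s - proxh s) := by
        rw [← smul_sub]; congr 1; abel
      simp only [dce]
      rw [hsm, inner_sub_left]; ring
    rw [heq]; exact hdiff
  · apply LipschitzWith.of_dist_le_mul
    intro x y
    have hK : ((Real.toNNReal γ⁻¹ : NNReal) : ℝ) = γ⁻¹ :=
      Real.coe_toNNReal _ (inv_nonneg.mpr hγ.le)
    rw [dist_eq_norm, dist_eq_norm, hK]
    have hsm : γ⁻¹ • (proxh x - proxg x) - γ⁻¹ • (proxh y - proxg y)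
        = γ⁻¹ • ((proxh x - proxg x) - (proxh y - proxg y)) := (smul_sub _ _ _).symm
    rw [hsm, norm_smul]
    have hb := prox_diff_nonexp hg_proper hg_convex hh_proper hh_convex hγ
      (hproxg x).1 (hproxg y).1 (hproxh x).1 (hproxh y).1
    have hn : ‖γ⁻¹‖ = γ⁻¹ := Real.norm_of_nonneg (inv_nonneg.mpr hγ.le)
    rw [hn]
    exact mul_le_mul_of_nonneg_left hb (inv_nonneg.mpr hγ.le)
end
end

section
/- For every γ > 0 and s ∈ ℝ^p, letting u = prox_{γh}(s) and v = prox_{γg}(s), the sandwich inequality φ(v) + (1/(2γ))‖v − u‖² ≤ φ_γ(s) ≤ φ(u) − (1/(2γ))‖v − u‖² holds. -/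
open scoped InnerProductSpace
noncomputable section

variable {p : ℕ}

-- helper 1: prox value is finite
lemma prox_val_finite (f : Euc p → EReal) (hf : ProperFun f) (γ : ℝ)
    (s u : Euc p) (hmin : ProxObjMin f γ s u) : ∃ r : ℝ, f u = (r : EReal) := by
  obtain ⟨hbot, x, hx⟩ := hf
  have htop : f u ≠ ⊤ := by
    intro htop
    have h1 := hmin x
    rw [htop, EReal.top_add_coe] at h1
    lift f x to ℝ using ⟨hx, hbot x⟩ with fx
    rw [← EReal.coe_add] at h1
    exact absurd h1 (not_le.mpr (EReal.coe_lt_top _))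
  exact ⟨(f u).toReal, (EReal.coe_toReal htop (hbot u)).symm⟩

-- helper 2: subgradient inequality
lemma prox_subgrad (f : Euc p → EReal) (hconv : ConvexFun f) (γ : ℝ) (hγ : 0 < γ)
    (s u : Euc p) (hmin : ProxObjMin f γ s u) (fu : ℝ) (hfu : f u = (fu : EReal))
    (z : Euc p) (fz : ℝ) (hfz : f z = (fz : EReal)) :
    fu + (1/γ) * ⟪s - u, z - u⟫_ℝ ≤ fz := by
  have key : ∀ t : ℝ, 0 < t → t ≤ 1 →
      fu + (1/γ) * ⟪s - u, z - u⟫_ℝ ≤ fz + (1/(2*γ)) * t * ‖z - u‖^2 := by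
    intro t ht0 ht1
    have hw : u + t • (z - u) = t • z + (1 - t) • u := by module
    have h1 := hmin (u + t • (z - u))
    have h2 := hconv z u t ht0.le ht1
    rw [← hw] at h2
    have h3 : f u + ((1/(2*γ) * ‖u - s‖^2 : ℝ) : EReal) ≤
        (t : EReal) * f z + ((1 - t : ℝ) : EReal) * f u
          + ((1/(2*γ) * ‖u + t • (z - u) - s‖^2 : ℝ) : EReal) :=
      h1.trans (add_le_add_left h2 _)
    rw [hfu, hfz, ← EReal.coe_mul, ← EReal.coe_mul, ← EReal.coe_add, ← EReal.coe_add,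
      ← EReal.coe_add, EReal.coe_le_coe_iff] at h3
    have hexp : ‖u + t • (z - u) - s‖^2
        = ‖u - s‖^2 + 2 * (t * ⟪u - s, z - u⟫_ℝ) + t^2 * ‖z - u‖^2 := by
      have : u + t • (z - u) - s = (u - s) + t • (z - u) := by abel
      rw [this, norm_add_sq_real, real_inner_smul_right, norm_smul]
      simp [mul_pow, abs_of_pos ht0]
    rw [hexp] at h3
    have hip : ⟪s - u, z - u⟫_ℝ = - ⟪u - s, z - u⟫_ℝ := by
      rw [show s - u = -(u - s) by abel, inner_neg_left]
    rw [hip]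
    have hγ' : (0:ℝ) < 1/(2*γ) := by positivity
    have hγne : γ ≠ 0 := hγ.ne'
    have h6 : t * (fu + (1/γ) * (- ⟪u - s, z - u⟫_ℝ)) ≤
        t * (fz + (1/(2*γ)) * t * ‖z - u‖^2) := by
      have h2c : (1/γ) * t * ⟪u - s, z - u⟫_ℝ
          = (1/(2*γ)) * (2 * (t * ⟪u - s, z - u⟫_ℝ)) := by
        field_simp
      ring_nf at h3 h2c ⊢
      linarith
    have := le_of_mul_le_mul_left h6 ht0
    linarith
  -- pass to the limit t → 0
  have hD : (0:ℝ) ≤ (1/(2*γ)) * ‖z - u‖^2 := by positivity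
  refine le_of_forall_pos_le_add ?_
  intro ε hε
  set D := (1/(2*γ)) * ‖z - u‖^2 with hDdef
  have hden : (0:ℝ) < D + 1 := by linarith
  have ht0 : (0:ℝ) < min 1 (ε / (D + 1)) := lt_min one_pos (div_pos hε hden)
  have := key (min 1 (ε / (D + 1))) ht0 (min_le_left _ _)
  have hle : (1/(2*γ)) * (min 1 (ε / (D + 1))) * ‖z - u‖^2 ≤ ε := by
    have h1 : min 1 (ε / (D + 1)) ≤ ε / (D + 1) := min_le_right _ _
    have : (1/(2*γ)) * (min 1 (ε / (D + 1))) * ‖z - u‖^2 = (min 1 (ε / (D + 1))) * D := by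
      rw [hDdef]; ring
    rw [this]
    calc (min 1 (ε / (D + 1))) * D ≤ (ε / (D + 1)) * D := by
          apply mul_le_mul_of_nonneg_right h1; positivity
      _ ≤ ε := by
          rw [div_mul_eq_mul_div, div_le_iff₀ hden]; nlinarith
  linarith

-- helper 3: moreau value
lemma moreau_val (f : Euc p → EReal) (γ : ℝ) (s u : Euc p)
    (hmin : ProxObjMin f γ s u) (fu : ℝ) (hfu : f u = (fu : EReal)) :
    moreau f γ s = ((fu + 1/(2*γ) * ‖u - s‖^2 : ℝ) : EReal) := by
  apply le_antisymm
  · refine (iInf_le _ u).trans ?_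
    rw [hfu, ← EReal.coe_add]
  · refine le_iInf fun w => ?_
    have := hmin w
    rw [hfu, ← EReal.coe_add] at this
    exact this


/-- sandwich inequality. For `u = prox_{γh}(s)` and `v = prox_{γg}(s)`,
`φ(v) + (1/(2γ))‖v − u‖² ≤ φ_γ(s) ≤ φ(u) − (1/(2γ))‖v − u‖²`. -/
theorem statement4
    (g h : Euc p → EReal)
    (hg_proper : ProperFun g) (hg_convex : ConvexFun g) (hg_lsc : LowerSemicontinuous g)
    (hh_proper : ProperFun h) (hh_convex : ConvexFun h) (hh_lsc : LowerSemicontinuous h)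
    (γ : ℝ) (hγ : 0 < γ) (s u v : Euc p)
    (hu : IsProxOf h γ s u) (hv : IsProxOf g γ s v) :
    dcVal g h v + ((1/(2*γ) * ‖v - u‖^2 : ℝ) : EReal) ≤ ((dce g h γ s : ℝ) : EReal) ∧
      ((dce g h γ s : ℝ) : EReal) ≤ dcVal g h u - ((1/(2*γ) * ‖v - u‖^2 : ℝ) : EReal) := by
  obtain ⟨gv, hgv⟩ := prox_val_finite g hg_proper γ s v hv.1
  obtain ⟨hur, hhu⟩ := prox_val_finite h hh_proper γ s u hu.1
  have hγne : γ ≠ 0 := hγ.ne'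
  have hdce : dce g h γ s
      = (gv + 1/(2*γ) * ‖v - s‖^2) - (hur + 1/(2*γ) * ‖u - s‖^2) := by
    rw [dce, moreauR, moreauR, moreau_val g γ s v hv.1 gv hgv,
      moreau_val h γ s u hu.1 hur hhu, EReal.toReal_coe, EReal.toReal_coe]
  constructor
  · -- left inequality
    by_cases hhv : h v = ⊤
    · have hb : dcVal g h v = ⊥ := by
        simp [dcVal, hgv, hhv]
      rw [hb]
      simp
    · have hhv' : h v = ((h v).toReal : EReal) := (EReal.coe_toReal hhv (hh_proper.1 v)).symm
      set hvr := (h v).toReal with hhvr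
      have hsub := prox_subgrad h hh_convex γ hγ s u hu.1 hur hhu v hvr hhv'
      have hdv : dcVal g h v = ((gv - hvr : ℝ) : EReal) := by
        rw [dcVal, if_neg (by rw [hgv]; exact EReal.coe_ne_top _), hgv, hhv', EReal.coe_sub]
      rw [hdv, ← EReal.coe_add, EReal.coe_le_coe_iff, hdce]
      have pol : ‖v - s‖^2 = ‖v - u‖^2 + 2 * ⟪v - u, u - s⟫_ℝ + ‖u - s‖^2 := by
        rw [show v - s = (v - u) + (u - s) by abel, norm_add_sq_real]
      have hip : ⟪s - u, v - u⟫_ℝ = - ⟪v - u, u - s⟫_ℝ := by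
        rw [show s - u = -(u - s) by abel, real_inner_comm, inner_neg_right]
      have key : (1/(2*γ)) * (2 * ⟪v - u, u - s⟫_ℝ) = - ((1/γ) * ⟪s - u, v - u⟫_ℝ) := by
        rw [hip]; field_simp
      rw [pol] at *
      ring_nf at key hsub ⊢
      linarith
  · -- right inequality
    by_cases hgu : g u = ⊤
    · have ht : dcVal g h u = ⊤ := by simp [dcVal, hgu]
      rw [ht, EReal.top_sub_coe]
      exact le_top
    · have hgu' : g u = ((g u).toReal : EReal) := (EReal.coe_toReal hgu (hg_proper.1 u)).symm
      set gur := (g u).toReal with hgur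
      have hsub := prox_subgrad g hg_convex γ hγ s v hv.1 gv hgv u gur hgu'
      have hdu : dcVal g h u = ((gur - hur : ℝ) : EReal) := by
        rw [dcVal, if_neg hgu, hgu', hhu, EReal.coe_sub]
      rw [hdu, ← EReal.coe_sub, EReal.coe_le_coe_iff, hdce]
      have pol : ‖u - s‖^2 = ‖u - v‖^2 + 2 * ⟪u - v, v - s⟫_ℝ + ‖v - s‖^2 := by
        rw [show u - s = (u - v) + (v - s) by abel, norm_add_sq_real]
      have hnvu : ‖v - u‖ = ‖u - v‖ := norm_sub_rev v u
      have hip : ⟪s - v, u - v⟫_ℝ = - ⟪u - v, v - s⟫_ℝ := by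
        rw [show s - v = -(v - s) by abel, real_inner_comm (u - v), inner_neg_right]
      have key : (1/(2*γ)) * (2 * ⟪u - v, v - s⟫_ℝ) = - ((1/γ) * ⟪s - v, u - v⟫_ℝ) := by
        rw [hip]; field_simp
      rw [pol, hnvu] at *
      ring_nf at key hsub ⊢
      linarith
end
end

section
/- A differentiable function f: ℝ^p → ℝ has L-Lipschitz continuous gradient if and only if both functions x ↦ (L/2)‖x‖² + f(x) and x ↦ (L/2)‖x‖² − f(x) are convex. -/
open scoped InnerProductSpace
open scoped RealInnerProductSpace
noncomputable section

variable {p : ℕ}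

lemma hasDerivAt_line (f : Euc p → ℝ) (g : Euc p) (x v : Euc p) (t : ℝ)
    (h : HasGradientAt f g (x + t • v)) :
    HasDerivAt (fun s : ℝ => f (x + s • v)) ⟪g, v⟫_ℝ t := by
  have hl : HasDerivAt (fun s : ℝ => x + s • v) v t := by
    simpa using ((hasDerivAt_id t).smul_const v).const_add x
  have := h.hasFDerivAt.comp_hasDerivAt t hl
  simpa [InnerProductSpace.toDual_apply_apply, Function.comp_def] using this


lemma quad_id (L : ℝ) (x y : Euc p) :
    L/2*‖y‖^2 = L/2*‖x‖^2 + ⟪L • x, y - x⟫_ℝ + L/2*‖y - x‖^2 := by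
  have h1 : ‖y - x‖^2 = ‖y‖^2 - 2*⟪y, x⟫_ℝ + ‖x‖^2 := norm_sub_sq_real y x
  have h2 : ⟪L • x, y - x⟫_ℝ = L * (⟪x, y⟫_ℝ - ‖x‖^2) := by
    rw [real_inner_smul_left, inner_sub_right, real_inner_self_eq_norm_sq]
  have h3 : ⟪y, x⟫_ℝ = ⟪x, y⟫_ℝ := real_inner_comm x y
  rw [h1, h2, h3]; ring

/-- gradient inequality implies convexity (no differentiability needed). -/
lemma convexOn_of_grad_ineq (g : Euc p → ℝ) (g' : Euc p → Euc p)
    (h : ∀ x y, g x + ⟪g' x, y - x⟫_ℝ ≤ g y) :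
    ConvexOn ℝ Set.univ g := by
  refine ⟨convex_univ, fun x _ y _ a b ha hb hab => ?_⟩
  set z := a • x + b • y with hzdef
  have hx := h z x
  have hy := h z y
  have hz : a • (x - z) + b • (y - z) = 0 := by
    have h4 : a • (x - z) + b • (y - z) = (a • x + b • y) - (a + b) • z := by module
    rw [h4, hab, one_smul, ← hzdef, sub_self]
  have hinner : a * ⟪g' z, x - z⟫_ℝ + b * ⟪g' z, y - z⟫_ℝ = 0 := by
    rw [← real_inner_smul_right, ← real_inner_smul_right, ← inner_add_right, hz, inner_zero_right]
  have hgz : a * g z + b * g z = g z := by rw [← add_mul, hab, one_mul]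
  simp only [smul_eq_mul]
  linarith [mul_le_mul_of_nonneg_left hx ha, mul_le_mul_of_nonneg_left hy hb]

/-- convexity implies the gradient inequality. -/
lemma grad_ineq_of_convexOn (g : Euc p → ℝ) (g' : Euc p → Euc p)
    (hg : ∀ x, HasGradientAt g (g' x) x)
    (hc : ConvexOn ℝ Set.univ g) (x y : Euc p) :
    g x + ⟪g' x, y - x⟫_ℝ ≤ g y := by
  set v := y - x with hv
  have hd : HasDerivAt (fun s : ℝ => g (x + s • v)) ⟪g' x, v⟫_ℝ 0 := by
    have := hasDerivAt_line g (g' x) x v 0 (by simpa using hg x)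
    simpa using this
  have htend : Filter.Tendsto (slope (fun s : ℝ => g (x + s • v)) 0) (nhdsWithin 0 (Set.Ioi 0))
      (nhds ⟪g' x, v⟫_ℝ) := by
    refine (hasDerivAt_iff_tendsto_slope.1 hd).mono_left (nhdsWithin_mono _ ?_)
    intro t ht
    exact Set.mem_compl_singleton_iff.2 (ne_of_gt ht)
  have hcc := hc.2
  have hev : ∀ᶠ t in nhdsWithin (0:ℝ) (Set.Ioi 0),
      slope (fun s : ℝ => g (x + s • v)) 0 t ≤ g y - g x := by
    filter_upwards [Ioc_mem_nhdsGT_of_mem (Set.left_mem_Ico.2 one_pos)] with t ht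
    have ht0 : (0:ℝ) < t := ht.1
    have hconv := hcc (Set.mem_univ x) (Set.mem_univ y) (a := 1 - t) (b := t)
      (by linarith [ht.2]) (le_of_lt ht0) (by ring)
    have hline : (1 - t) • x + t • y = x + t • v := by
      rw [hv]; module
    rw [hline] at hconv
    simp only [smul_eq_mul] at hconv
    have key : g (x + t • v) - g x ≤ t * (g y - g x) := by nlinarith [hconv]
    have hs : slope (fun s : ℝ => g (x + s • v)) 0 t = (g (x + t • v) - g x) / t := by
      rw [slope_def_field]; simp
    rw [hs, div_le_iff₀ ht0]
    linarith [key]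
  have := le_of_tendsto htend hev
  linarith [this]


/-- descent lemma from a Lipschitz-type bound on the gradient. -/
lemma descent_of_lip (f : Euc p → ℝ) (f' : Euc p → Euc p)
    (hf : ∀ x, HasGradientAt f (f' x) x) (L : ℝ)
    (hlip : ∀ a b, ‖f' a - f' b‖ ≤ L * ‖a - b‖) (x y : Euc p) :
    f y ≤ f x + ⟪f' x, y - x⟫_ℝ + L/2 * ‖y - x‖^2 := by
  set v := y - x with hv
  set c := ⟪f' x, v⟫_ℝ with hc
  set ψ : ℝ → ℝ := fun t => f (x + t • v) - t * c - (L/2 * ‖v‖^2) * t^2 with hψdef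
  have hψ : ∀ t : ℝ, HasDerivAt ψ (⟪f' (x + t • v), v⟫_ℝ - c - (L/2 * ‖v‖^2) * (2*t)) t := by
    intro t
    exact ((hasDerivAt_line f (f' (x + t • v)) x v t (hf _)).sub
      (hasDerivAt_mul_const c)).sub (by simpa using (hasDerivAt_pow 2 t).const_mul (L/2 * ‖v‖^2))
  have hanti : AntitoneOn ψ (Set.Icc 0 1) := by
    refine antitoneOn_of_deriv_nonpos (convex_Icc 0 1)
      (fun t _ => ((hψ t).continuousAt).continuousWithinAt)
      (fun t _ => ((hψ t).differentiableAt).differentiableWithinAt) (fun t ht => ?_)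
    rw [interior_Icc] at ht
    rw [(hψ t).deriv]
    have h1 : ⟪f' (x + t • v) - f' x, v⟫_ℝ ≤ ‖f' (x + t • v) - f' x‖ * ‖v‖ :=
      real_inner_le_norm _ _
    have h2 : ‖f' (x + t • v) - f' x‖ ≤ L * (t * ‖v‖) := by
      have := hlip (x + t • v) x
      simpa [norm_smul, abs_of_pos ht.1, mul_assoc] using this
    have h3 : ⟪f' (x + t • v), v⟫_ℝ - c = ⟪f' (x + t • v) - f' x, v⟫_ℝ := by
      rw [inner_sub_left, hc]
    rw [h3]
    nlinarith [h1, mul_le_mul_of_nonneg_right h2 (norm_nonneg v)]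
  have h01 := hanti (Set.mem_Icc.2 ⟨le_refl 0, zero_le_one⟩)
      (Set.mem_Icc.2 ⟨zero_le_one, le_refl 1⟩) zero_le_one
  have hψ0 : ψ 0 = f x := by simp [hψdef]
  have hψ1 : ψ 1 = f y - c - L/2 * ‖v‖^2 := by simp [hψdef, hv]
  rw [hψ0, hψ1] at h01
  rw [hc] at h01
  linarith [h01]

/-- co-coercivity. -/
lemma cocoercivity (g : Euc p → ℝ) (g' : Euc p → Euc p) (M : ℝ) (hM : 0 < M)
    (hgi : ∀ x y, g x + ⟪g' x, y - x⟫_ℝ ≤ g y)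
    (hd : ∀ x y, g y ≤ g x + ⟪g' x, y - x⟫_ℝ + M/2 * ‖y - x‖^2) (x y : Euc p) :
    ‖g' x - g' y‖^2 / M ≤ ⟪g' x - g' y, x - y⟫_ℝ := by
  have claim : ∀ a b : Euc p,
      g a + ⟪g' a, b - a⟫_ℝ + ‖g' b - g' a‖^2 / (2*M) ≤ g b := by
    intro a b
    set d := g' b - g' a with hdd
    set z := b - (1/M) • d with hz
    have h1 := hd b z
    have h2 := hgi a z
    have hzb : z - b = -((1/M) • d) := by rw [hz]; abel
    have hza : z - a = (b - a) - (1/M) • d := by rw [hz]; abel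
    have e1 : ⟪g' b, z - b⟫_ℝ = -(1/M) * ⟪g' b, d⟫_ℝ := by
      rw [hzb, inner_neg_right, real_inner_smul_right]; ring
    have e2 : ‖z - b‖^2 = (1/M)^2 * ‖d‖^2 := by
      simp [hzb, norm_smul, mul_pow, sq_abs]
    have e3 : ⟪g' a, z - a⟫_ℝ = ⟪g' a, b - a⟫_ℝ - (1/M) * ⟪g' a, d⟫_ℝ := by
      rw [hza, inner_sub_right, real_inner_smul_right]
    have e4 : ⟪g' b, d⟫_ℝ - ⟪g' a, d⟫_ℝ = ‖d‖^2 := by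
      rw [← inner_sub_left, ← hdd, real_inner_self_eq_norm_sq]
    rw [e1, e2] at h1
    rw [e3] at h2
    have hM0 : M ≠ 0 := ne_of_gt hM
    have e5 : (1/M)*⟪g' b, d⟫_ℝ - (1/M)*⟪g' a, d⟫_ℝ = (1/M)*‖d‖^2 := by
      rw [← mul_sub, e4]
    have key : M/2*((1/M)^2*‖d‖^2) = ‖d‖^2/(2*M) := by field_simp
    have key3 : (1/M)*‖d‖^2 = ‖d‖^2/(2*M) + ‖d‖^2/(2*M) := by field_simp; ring
    linarith [h1, h2, e5, key, key3]
  have c1 := claim x y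
  have c2 := claim y x
  have hrev : ‖g' y - g' x‖ = ‖g' x - g' y‖ := norm_sub_rev _ _
  rw [hrev] at c1
  have hsum : ⟪g' x, y - x⟫_ℝ + ⟪g' y, x - y⟫_ℝ = -⟪g' x - g' y, x - y⟫_ℝ := by
    rw [inner_sub_left]
    have : ⟪g' x, y - x⟫_ℝ = -⟪g' x, x - y⟫_ℝ := by
      rw [← inner_neg_right]; congr 1; abel
    rw [this]; ring
  have hdiv : ‖g' x - g' y‖^2 / (2*M) + ‖g' x - g' y‖^2 / (2*M) = ‖g' x - g' y‖^2 / M := by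
    field_simp; ring
  linarith [c1, c2, hsum, hdiv]


lemma hasGradientAt_quad (L : ℝ) (x : Euc p) :
    HasGradientAt (fun y : Euc p => L/2 * ‖y‖^2) ((L:ℝ) • x) x := by
  rw [hasGradientAt_iff_isLittleO]
  have heq : (fun y : Euc p => L/2 * ‖y‖^2 - L/2 * ‖x‖^2 - ⟪(L:ℝ) • x, y - x⟫_ℝ)
      = fun y : Euc p => L/2 * ‖y - x‖^2 := by
    funext y
    have := quad_id L x y
    linarith
  rw [heq]
  rw [Asymptotics.isLittleO_iff]
  intro c hc
  have hδ : (0:ℝ) < c / (|L|/2 + 1) := by positivity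
  filter_upwards [Metric.closedBall_mem_nhds x hδ] with y hy
  rw [Metric.mem_closedBall, dist_eq_norm] at hy
  have h1 : ‖L/2 * ‖y - x‖^2‖ = |L|/2 * (‖y - x‖ * ‖y - x‖) := by
    rw [Real.norm_eq_abs, abs_mul, abs_div, abs_two, abs_of_nonneg (sq_nonneg ‖y - x‖)]
    ring
  rw [h1]
  have h2 : |L|/2 * ‖y - x‖ ≤ |L|/2 * (c / (|L|/2 + 1)) :=
    mul_le_mul_of_nonneg_left hy (by positivity)
  have h3 : |L|/2 * (c / (|L|/2 + 1)) ≤ c := by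
    have hb : (0:ℝ) < |L|/2 + 1 := by positivity
    rw [mul_comm, div_mul_eq_mul_div, div_le_iff₀ hb]
    nlinarith [abs_nonneg L, hc.le]
  calc |L|/2 * (‖y - x‖ * ‖y - x‖) = (|L|/2 * ‖y - x‖) * ‖y - x‖ := by ring
    _ ≤ c * ‖y - x‖ := mul_le_mul_of_nonneg_right (le_trans h2 h3) (norm_nonneg _)

lemma hasGradientAt_plus (f : Euc p → ℝ) (f' : Euc p → Euc p)
    (hf : ∀ x, HasGradientAt f (f' x) x) (L : ℝ) (x : Euc p) :
    HasGradientAt (fun y => L/2 * ‖y‖^2 + f y) ((L:ℝ) • x + f' x) x := by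
  rw [hasGradientAt_iff_hasFDerivAt, map_add]
  exact (hasGradientAt_quad L x).hasFDerivAt.add (hf x).hasFDerivAt

lemma hasGradientAt_minus (f : Euc p → ℝ) (f' : Euc p → Euc p)
    (hf : ∀ x, HasGradientAt f (f' x) x) (L : ℝ) (x : Euc p) :
    HasGradientAt (fun y => L/2 * ‖y‖^2 - f y) ((L:ℝ) • x - f' x) x := by
  rw [hasGradientAt_iff_hasFDerivAt, map_sub]
  exact (hasGradientAt_quad L x).hasFDerivAt.sub (hf x).hasFDerivAt



/-- a differentiable `f : ℝ^p → ℝ` (with gradient `f'`) has `L`-Lipschitz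
gradient iff both `x ↦ (L/2)‖x‖² + f(x)` and `x ↦ (L/2)‖x‖² − f(x)` are convex. -/
theorem statement6
    (f : Euc p → ℝ) (f' : Euc p → Euc p)
    (hf : ∀ x, HasGradientAt f (f' x) x)
    (L : ℝ) (hL : 0 ≤ L) :
    LipschitzWith (Real.toNNReal L) f' ↔
      (ConvexOn ℝ Set.univ (fun x => L/2 * ‖x‖^2 + f x) ∧
        ConvexOn ℝ Set.univ (fun x => L/2 * ‖x‖^2 - f x)) := by
  constructor
  · intro hlip
    have hb : ∀ a b, ‖f' a - f' b‖ ≤ L * ‖a - b‖ := by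
      intro a b
      have := hlip.dist_le_mul a b
      rwa [dist_eq_norm, dist_eq_norm, Real.coe_toNNReal L hL] at this
    have hub : ∀ x y, f y ≤ f x + ⟪f' x, y - x⟫_ℝ + L/2 * ‖y - x‖^2 :=
      descent_of_lip f f' hf L hb
    have hfneg : ∀ x, HasGradientAt (fun z => -f z) (-(f' x)) x := by
      intro x
      rw [hasGradientAt_iff_hasFDerivAt, map_neg]
      exact (hf x).hasFDerivAt.neg
    have hlb : ∀ x y, f x + ⟪f' x, y - x⟫_ℝ - L/2 * ‖y - x‖^2 ≤ f y := by
      intro x y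
      have := descent_of_lip (fun z => -f z) (fun z => -(f' z)) (fun z => hfneg z) L
        (by intro a b; rw [neg_sub_neg, norm_sub_rev]; exact hb a b) x y
      rw [inner_neg_left] at this
      linarith
    constructor
    · refine convexOn_of_grad_ineq _ (fun x => (L:ℝ) • x + f' x) (fun x y => ?_)
      have hq := quad_id L x y
      have h1 : ⟪(L:ℝ) • x + f' x, y - x⟫_ℝ = ⟪(L:ℝ) • x, y - x⟫_ℝ + ⟪f' x, y - x⟫_ℝ :=
        inner_add_left _ _ _
      have := hlb x y
      rw [h1]
      linarith
    · refine convexOn_of_grad_ineq _ (fun x => (L:ℝ) • x - f' x) (fun x y => ?_)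
      have hq := quad_id L x y
      have h1 : ⟪(L:ℝ) • x - f' x, y - x⟫_ℝ = ⟪(L:ℝ) • x, y - x⟫_ℝ - ⟪f' x, y - x⟫_ℝ :=
        inner_sub_left _ _ _
      have := hub x y
      rw [h1]
      linarith
  · rintro ⟨hcp, hcm⟩
    have hgp : ∀ x, HasGradientAt (fun y => L/2 * ‖y‖^2 + f y) ((L:ℝ) • x + f' x) x :=
      hasGradientAt_plus f f' hf L
    have hgm : ∀ x, HasGradientAt (fun y => L/2 * ‖y‖^2 - f y) ((L:ℝ) • x - f' x) x :=
      hasGradientAt_minus f f' hf L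
    have hip := grad_ineq_of_convexOn _ _ hgp hcp
    have him := grad_ineq_of_convexOn _ _ hgm hcm
    have hlb : ∀ x y, f x + ⟪f' x, y - x⟫_ℝ - L/2 * ‖y - x‖^2 ≤ f y := by
      intro x y
      have h := hip x y
      have hq := quad_id L x y
      rw [inner_add_left] at h
      linarith
    have hub : ∀ x y, f y ≤ f x + ⟪f' x, y - x⟫_ℝ + L/2 * ‖y - x‖^2 := by
      intro x y
      have h := him x y
      have hq := quad_id L x y
      rw [inner_sub_left] at h
      linarith
    have key : ∀ x y, ‖f' x - f' y‖ ≤ L * ‖x - y‖ := by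
      intro x y
      rcases eq_or_lt_of_le hL with hL0 | hL0
      · -- L = 0 : f is affine, gradient constant
        have heq : ∀ a b : Euc p, f b = f a + ⟪f' a, b - a⟫_ℝ := by
          intro a b
          have h1 := hlb a b
          have h2 := hub a b
          rw [← hL0] at h1 h2
          simp only [zero_div, zero_mul] at h1 h2
          linarith
        have hxy : f' x = f' y := by
          have h1 := heq x (x + (f' x - f' y))
          have h2 := heq y (x + (f' x - f' y))
          have h3 := heq y x
          have e1 : x + (f' x - f' y) - x = f' x - f' y := by abel
          have e2 : x + (f' x - f' y) - y = (x - y) + (f' x - f' y) := by abel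
          rw [e1] at h1
          rw [e2, inner_add_right] at h2
          rw [h3] at h1
          have : ⟪f' x - f' y, f' x - f' y⟫_ℝ = 0 := by
            have e3 : ⟪f' x, f' x - f' y⟫_ℝ = ⟪f' y, f' x - f' y⟫_ℝ := by linarith
            rw [inner_sub_left, e3]
            ring
          have := inner_self_eq_zero.1 this
          exact sub_eq_zero.1 this
        rw [hxy, sub_self, norm_zero]
        positivity
      · -- L > 0 : co-coercivity of the convex function (L/2)‖·‖² + f
        have hdescent : ∀ a b : Euc p, (fun y => L/2 * ‖y‖^2 + f y) b ≤
            (fun y => L/2 * ‖y‖^2 + f y) a + ⟪(L:ℝ) • a + f' a, b - a⟫_ℝ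
              + (2*L)/2 * ‖b - a‖^2 := by
          intro a b
          have hq := quad_id L a b
          have h := hub a b
          simp only [inner_add_left]
          have hsq : (2*L)/2 * ‖b - a‖^2 = L/2 * ‖b - a‖^2 + L/2 * ‖b - a‖^2 := by ring
          linarith
        have hco := cocoercivity _ (fun x => (L:ℝ) • x + f' x) (2*L) (by linarith)
          hip hdescent x y
        set u := x - y with hu
        set d := f' x - f' y with hd
        have hGdiff : ((L:ℝ) • x + f' x) - ((L:ℝ) • y + f' y) = (L:ℝ) • u + d := by
          rw [hu, hd, smul_sub]; abel
        rw [hGdiff] at hco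
        have hnorm : ‖(L:ℝ) • u + d‖^2 = L^2 * ‖u‖^2 + 2*(L*⟪u, d⟫_ℝ) + ‖d‖^2 := by
          rw [norm_add_sq_real, real_inner_smul_left, norm_smul, mul_pow,
            Real.norm_eq_abs, sq_abs]
        have hinner : ⟪(L:ℝ) • u + d, u⟫_ℝ = L * ‖u‖^2 + ⟪u, d⟫_ℝ := by
          rw [inner_add_left, real_inner_smul_left, real_inner_self_eq_norm_sq]
          rw [real_inner_comm u d]
        rw [hnorm, hinner] at hco
        have h2L : (0:ℝ) < 2*L := by linarith
        rw [div_le_iff₀ h2L] at hco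
        have hsq : ‖d‖^2 ≤ (L * ‖u‖)^2 := by nlinarith [hco]
        nlinarith [hsq, norm_nonneg d, mul_nonneg hL (norm_nonneg u)]
    refine LipschitzWith.of_dist_le_mul (fun a b => ?_)
    rw [dist_eq_norm, dist_eq_norm, Real.coe_toNNReal L hL]
    exact key a b
end
end

section
/- Let g, h: ℝ^p → ℝ ∪ {∞} be proper and lsc and μ ∈ ℝ be such that both g + (μ/2)‖·‖² and h + (μ/2)‖·‖² are convex, suppose φ = g − h is lower bounded, and let γ > 0 with γμ < 1 and 0 < λ < 2(1 − γμ). Then the iteration u^k = prox_{γh}(s^k), v^k = prox_{γg}(s^k), s^{k+1} = s^k + λ(v^k − u^k) (with each proximal mapping single-valued since γμ < 1) satisfies Σ_{k=0}^∞ ‖u^k − v^k‖² < ∞ and min_{i≤k} ‖u^i − v^i‖ = o(1/√k). -/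
open scoped InnerProductSpace
noncomputable section

variable {p : ℕ}

/-! ### Auxiliary lemmas -/

lemma sq_combo (w u z : Euc p) (t : ℝ) :
    ‖t • w + (1 - t) • u - z‖^2
      = t*‖w - z‖^2 + (1-t)*‖u - z‖^2 - (t*(1-t))*‖w - u‖^2 := by
  have h : t • w + (1 - t) • u - z = t • (w - z) + (1 - t) • (u - z) := by
    module
  rw [h]
  have h1 : ‖t • (w-z) + (1-t) • (u-z)‖^2
      = t^2*‖w-z‖^2 + 2*(t*(1-t))*⟪w-z, u-z⟫_ℝ + (1-t)^2*‖u-z‖^2 := by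
    rw [norm_add_sq_real, real_inner_smul_left, real_inner_smul_right, norm_smul, norm_smul]
    simp only [Real.norm_eq_abs, mul_pow, sq_abs]
    ring
  have h2 : ‖w - u‖^2 = ‖w-z‖^2 - 2*⟪w-z, u-z⟫_ℝ + ‖u-z‖^2 := by
    have h3 : w - u = (w - z) - (u - z) := by abel
    rw [h3, norm_sub_sq_real]
  rw [h1, h2]; ring

lemma sq_shift (a b d : Euc p) :
    ‖a - (b + d)‖^2 = ‖a - b‖^2 - 2*⟪a - b, d⟫_ℝ + ‖d‖^2 := by
  have h : a - (b + d) = (a - b) - d := by abel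
  rw [h, norm_sub_sq_real]

lemma proxmin_ne_top {f : Euc p → EReal} (hbot : ∀ x, f x ≠ ⊥) (hex : ∃ x, f x ≠ ⊤)
    {γ : ℝ} {x u : Euc p} (hm : ProxObjMin f γ x u) : f u ≠ ⊤ := by
  obtain ⟨x₀, hx₀⟩ := hex
  intro hT
  have h := hm x₀
  rw [hT, EReal.top_add_coe, ← EReal.coe_toReal hx₀ (hbot x₀), ← EReal.coe_add] at h
  exact ((EReal.coe_lt_top _).not_ge h).elim

lemma proxmin_real {f : Euc p → EReal} {γ : ℝ} {x u : Euc p} (hm : ProxObjMin f γ x u)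
    (hbot : ∀ y, f y ≠ ⊥) (hut : f u ≠ ⊤) (w : Euc p) (hwt : f w ≠ ⊤) :
    (f u).toReal + 1/(2*γ) * ‖u-x‖^2 ≤ (f w).toReal + 1/(2*γ) * ‖w-x‖^2 := by
  have h := hm w
  rw [← EReal.coe_toReal hut (hbot u), ← EReal.coe_toReal hwt (hbot w),
    ← EReal.coe_add, ← EReal.coe_add, EReal.coe_le_coe_iff] at h
  exact h

lemma prox_strong {f : Euc p → EReal} {μ γ : ℝ}
    (hbot : ∀ x, f x ≠ ⊥)
    (hconv : ConvexFun (fun x => f x + ((μ/2 * ‖x‖^2 : ℝ) : EReal)))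
    (hγ : 0 < γ) (hγμ : γ * μ < 1)
    {x u : Euc p} (hm : ProxObjMin f γ x u) (hut : f u ≠ ⊤)
    (w : Euc p) (hwt : f w ≠ ⊤) :
    (f u).toReal + 1/(2*γ) * ‖u - x‖^2 + (1-γ*μ)/(2*γ) * ‖w - u‖^2
      ≤ (f w).toReal + 1/(2*γ) * ‖w - x‖^2 := by
  have hone : (0:ℝ) < 1 - γ*μ := by linarith
  have hc : (1-γ*μ)/(2*γ) = 1/(2*γ) - μ/2 := by field_simp
  have hβ' : (0:ℝ) < 1/(2*γ) - μ/2 := by rw [← hc]; positivity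
  rw [hc]
  have hfu : f u = (((f u).toReal : ℝ) : EReal) := (EReal.coe_toReal hut (hbot u)).symm
  have hfw : f w = (((f w).toReal : ℝ) : EReal) := (EReal.coe_toReal hwt (hbot w)).symm
  set U := (f u).toReal with hU
  set W := (f w).toReal with hW
  have key : ∀ t : ℝ, 0 < t → t ≤ 1 →
      U + 1/(2*γ) * ‖u - x‖^2 + (1-t)*(1/(2*γ) - μ/2)*‖w - u‖^2
        ≤ W + 1/(2*γ) * ‖w - x‖^2 := by
    intro t ht0 ht1
    have hcv := hconv w u t ht0.le ht1
    simp only at hcv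
    rw [hfu, hfw, ← EReal.coe_add, ← EReal.coe_add, ← EReal.coe_mul, ← EReal.coe_mul,
      ← EReal.coe_add] at hcv
    set wt := t • w + (1 - t) • u with hwtdef
    have hwt_top : f wt ≠ ⊤ := by
      intro hT
      rw [hT, EReal.top_add_coe] at hcv
      exact ((EReal.coe_lt_top _).not_ge hcv).elim
    have hfwt : f wt = (((f wt).toReal : ℝ) : EReal) := (EReal.coe_toReal hwt_top (hbot wt)).symm
    rw [hfwt, ← EReal.coe_add, EReal.coe_le_coe_iff] at hcv
    have hmin := hm wt
    rw [hfu, hfwt, ← EReal.coe_add, ← EReal.coe_add, EReal.coe_le_coe_iff] at hmin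
    have e1 : ‖wt - (0:Euc p)‖^2
        = t*‖w - 0‖^2 + (1-t)*‖u - 0‖^2 - (t*(1-t))*‖w - u‖^2 := sq_combo w u 0 t
    simp only [sub_zero] at e1
    have e1m : μ/2*‖wt‖^2
        = μ/2*(t*‖w‖^2 + (1-t)*‖u‖^2 - (t*(1-t))*‖w - u‖^2) := by rw [e1]
    have e2m : 1/(2*γ)*‖wt - x‖^2
        = 1/(2*γ)*(t*‖w - x‖^2 + (1-t)*‖u - x‖^2 - (t*(1-t))*‖w - u‖^2) := by
      rw [sq_combo w u x t]
    have hmul : t*(U + 1/(2*γ) * ‖u - x‖^2 + (1-t)*(1/(2*γ) - μ/2)*‖w - u‖^2)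
        ≤ t*(W + 1/(2*γ) * ‖w - x‖^2) := by
      nlinarith [hmin, hcv, e1m, e2m]
    exact le_of_mul_le_mul_left hmul ht0
  have hD : (0:ℝ) ≤ ‖w - u‖^2 := by positivity
  have hβD : (0:ℝ) ≤ (1/(2*γ) - μ/2)*‖w - u‖^2 := mul_nonneg hβ'.le hD
  have main : ∀ ε : ℝ, 0 < ε →
      U + 1/(2*γ) * ‖u - x‖^2 + (1/(2*γ) - μ/2)*‖w - u‖^2
        ≤ W + 1/(2*γ) * ‖w - x‖^2 + ε := by
    intro ε hε
    set B := (1/(2*γ) - μ/2)*‖w - u‖^2 with hB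
    set tt := min 1 (ε/(B+1)) with htt
    have hB1 : (0:ℝ) < B + 1 := by linarith
    have ht0 : 0 < tt := lt_min one_pos (div_pos hε hB1)
    have ht1 : tt ≤ 1 := min_le_left _ _
    have hk := key tt ht0 ht1
    have h2 : tt ≤ ε/(B+1) := min_le_right _ _
    have h3 : tt*B ≤ ε := by
      calc tt*B ≤ (ε/(B+1))*B := mul_le_mul_of_nonneg_right h2 hβD
        _ ≤ ε := by rw [div_mul_eq_mul_div, div_le_iff₀ hB1]; nlinarith
    nlinarith [hk, h3]
  by_contra hcon
  push_neg at hcon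
  have := main ((U + 1/(2*γ) * ‖u - x‖^2 + (1/(2*γ) - μ/2)*‖w - u‖^2
      - (W + 1/(2*γ) * ‖w - x‖^2))/2) (by linarith)
  linarith

open Filter in
lemma min_o (a : ℕ → ℝ) (ha0 : ∀ k, 0 ≤ a k) (hsum : Summable a) :
    Tendsto (fun k : ℕ => ((k : ℝ) + 1) * ⨅ i : Fin (k+1), a i)
      atTop (nhds 0) := by
  rw [Metric.tendsto_atTop]
  intro ε hε
  have htail := tendsto_sum_nat_add a
  rw [Metric.tendsto_atTop] at htail
  obtain ⟨N, hN⟩ := htail (ε/2) (half_pos hε)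
  refine ⟨2*N + 1, fun k hk => ?_⟩
  have hNk : N ≤ k := by omega
  set m := ⨅ i : Fin (k+1), a ↑i with hm
  have hm0 : 0 ≤ m := le_ciInf fun i => ha0 i
  have hmle : ∀ i : Fin (k+1), m ≤ a ↑i := fun i =>
    ciInf_le (Set.Finite.bddBelow (Set.finite_range _)) i
  have hsum1 : ((k - N + 1 : ℕ) : ℝ) * m ≤ ∑ i ∈ Finset.range (k - N + 1), a (i + N) := by
    have := Finset.card_nsmul_le_sum (Finset.range (k - N + 1)) (fun i => a (i + N)) m
      (fun i hi => by
        have hi' : i + N < k + 1 := by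
          have := Finset.mem_range.mp hi; omega
        exact hmle ⟨i + N, hi'⟩)
    simpa [nsmul_eq_mul] using this
  have hsummable' : Summable (fun i => a (i + N)) := (summable_nat_add_iff N).2 hsum
  have hsum2 : ∑ i ∈ Finset.range (k - N + 1), a (i + N) ≤ ∑' i, a (i + N) :=
    Summable.sum_le_tsum _ (fun i _ => ha0 _) hsummable'
  have htail' : ∑' i, a (i + N) < ε/2 := by
    have := hN N le_rfl
    rw [Real.dist_eq, sub_zero, abs_of_nonneg (tsum_nonneg (fun i => ha0 _))] at this
    exact this
  have hkey : ((k - N + 1 : ℕ) : ℝ) * m < ε/2 := lt_of_le_of_lt (hsum1.trans hsum2) htail'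
  have hcast : ((k - N + 1 : ℕ) : ℝ) = (k : ℝ) - N + 1 := by
    push_cast [Nat.cast_sub hNk]; ring
  rw [hcast] at hkey
  have hk' : 2*(N:ℝ) + 1 ≤ (k:ℝ) := by exact_mod_cast hk
  rw [Real.dist_eq, sub_zero, abs_of_nonneg (mul_nonneg (by positivity) hm0)]
  nlinarith [mul_nonneg hm0 (by linarith : (0:ℝ) ≤ (k:ℝ) - 2*N + 1)]

open Filter in
/-- hypoconvex version. If `g + (μ/2)‖·‖²` and `h + (μ/2)‖·‖²` are convex,
`φ = g − h` is lower bounded, `γμ < 1` and `0 < λ < 2(1 − γμ)`, the iterates satisfy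
`Σ_k ‖u^k − v^k‖² < ∞` and `min_{i≤k}‖u^i − v^i‖ = o(1/√k)`. -/
theorem statement16
    (g h : Euc p → EReal)
    (hg_proper : ProperFun g) (hg_lsc : LowerSemicontinuous g)
    (hh_proper : ProperFun h) (hh_lsc : LowerSemicontinuous h)
    (μ : ℝ)
    (hg_hypo : ConvexFun (fun x => g x + ((μ/2 * ‖x‖^2 : ℝ) : EReal)))
    (hh_hypo : ConvexFun (fun x => h x + ((μ/2 * ‖x‖^2 : ℝ) : EReal)))
    (hlb : ∃ c : ℝ, ∀ x, (c : EReal) ≤ dcVal g h x)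
    (γ : ℝ) (hγ : 0 < γ) (hγμ : γ * μ < 1)
    (lam : ℝ) (hlam0 : 0 < lam) (hlam2 : lam < 2 * (1 - γ * μ))
    (s u v : ℕ → Euc p)
    (hu : ∀ k, IsProxOf h γ (s k) (u k)) (hv : ∀ k, IsProxOf g γ (s k) (v k))
    (hs : ∀ k, s (k+1) = s k + lam • (v k - u k)) :
    Summable (fun k => ‖u k - v k‖^2) ∧
      Tendsto (fun k : ℕ => ((k : ℝ) + 1) * ⨅ i : Fin (k+1), ‖u i - v i‖^2)
        atTop (nhds 0) := by
  have hone : (0:ℝ) < 1 - γ*μ := by linarith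
  obtain ⟨cl, hcl⟩ := hlb
  have hgbot : ∀ x, g x ≠ ⊥ := hg_proper.1
  have hhbot : ∀ x, h x ≠ ⊥ := hh_proper.1
  have hvtop : ∀ k, g (v k) ≠ ⊤ := fun k => proxmin_ne_top hgbot hg_proper.2 (hv k).1
  have hutop : ∀ k, h (u k) ≠ ⊤ := fun k => proxmin_ne_top hhbot hh_proper.2 (hu k).1
  have hhvtop : ∀ k, h (v k) ≠ ⊤ := by
    intro k hT
    have hd := hcl (v k)
    rw [dcVal, if_neg (hvtop k), hT, EReal.sub_top] at hd
    exact ((EReal.bot_lt_coe cl).not_ge hd).elim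
  -- the envelope-type Lyapunov function
  set Φ : ℕ → ℝ := fun k => ((g (v k)).toReal + 1/(2*γ) * ‖v k - s k‖^2)
      - ((h (u k)).toReal + 1/(2*γ) * ‖u k - s k‖^2) with hΦ
  -- lower bound
  have hlow : ∀ k, cl ≤ Φ k := by
    intro k
    have h1 := proxmin_real (hu k).1 hhbot (hutop k) (v k) (hhvtop k)
    have hd := hcl (v k)
    rw [dcVal, if_neg (hvtop k), ← EReal.coe_toReal (hvtop k) (hgbot (v k)),
      ← EReal.coe_toReal (hhvtop k) (hhbot (v k)), ← EReal.coe_sub,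
      EReal.coe_le_coe_iff] at hd
    simp only [hΦ]
    linarith
  -- descent
  set κ : ℝ := lam/γ - lam^2/(2*γ*(1-γ*μ)) with hκ
  have hκpos : 0 < κ := by
    have hform : κ = lam*(2*(1-γ*μ) - lam)/(2*γ*(1-γ*μ)) := by
      rw [hκ]; field_simp
    rw [hform]
    exact div_pos (mul_pos hlam0 (by linarith)) (mul_pos (by linarith) hone)
  have hdesc : ∀ k, Φ (k+1) + κ * ‖u k - v k‖^2 ≤ Φ k := by
    intro k
    have i1 := proxmin_real (hv (k+1)).1 hgbot (hvtop (k+1)) (v k) (hvtop k)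
    have i2 := prox_strong hhbot hh_hypo hγ hγμ (hu k).1 (hutop k) (u (k+1)) (hutop (k+1))
    have e1 : 1/(2*γ)*‖v k - s (k+1)‖^2
        = 1/(2*γ)*‖v k - s k‖^2 - (1/γ)*lam*⟪v k - s k, v k - u k⟫_ℝ
          + 1/(2*γ)*lam^2*‖v k - u k‖^2 := by
      rw [hs k, sq_shift, real_inner_smul_right, norm_smul]
      simp only [Real.norm_eq_abs, mul_pow, sq_abs]
      ring
    have e2 : 1/(2*γ)*‖u (k+1) - s (k+1)‖^2
        = 1/(2*γ)*‖u (k+1) - s k‖^2 - (1/γ)*lam*⟪u (k+1) - s k, v k - u k⟫_ℝ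
          + 1/(2*γ)*lam^2*‖v k - u k‖^2 := by
      rw [hs k, sq_shift, real_inner_smul_right, norm_smul]
      simp only [Real.norm_eq_abs, mul_pow, sq_abs]
      ring
    have id1 : (1/γ)*lam*⟪v k - s k, v k - u k⟫_ℝ
        = (1/γ)*lam*⟪u k - s k, v k - u k⟫_ℝ + (1/γ)*lam*‖v k - u k‖^2 := by
      have hsplit : v k - s k = (u k - s k) + (v k - u k) := by abel
      rw [hsplit, inner_add_left, real_inner_self_eq_norm_sq]
      ring
    have id2 : (1/γ)*lam*⟪u (k+1) - s k, v k - u k⟫_ℝ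
        = (1/γ)*lam*⟪u (k+1) - u k, v k - u k⟫_ℝ
          + (1/γ)*lam*⟪u k - s k, v k - u k⟫_ℝ := by
      have hsplit : u (k+1) - s k = (u (k+1) - u k) + (u k - s k) := by abel
      rw [hsplit, inner_add_left]
      ring
    have amgm : (1/γ)*lam*⟪u (k+1) - u k, v k - u k⟫_ℝ
        ≤ (1-γ*μ)/(2*γ)*‖u (k+1) - u k‖^2 + lam^2/(2*γ*(1-γ*μ))*‖v k - u k‖^2 := by
      have cs : ⟪u (k+1) - u k, v k - u k⟫_ℝ ≤ ‖u (k+1) - u k‖*‖v k - u k‖ :=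
        real_inner_le_norm _ _
      have h1 : (1/γ)*lam*⟪u (k+1) - u k, v k - u k⟫_ℝ
          ≤ (1/γ)*lam*(‖u (k+1) - u k‖*‖v k - u k‖) :=
        mul_le_mul_of_nonneg_left cs (by positivity)
      have expand : (1-γ*μ)/(2*γ)*‖u (k+1) - u k‖^2 + lam^2/(2*γ*(1-γ*μ))*‖v k - u k‖^2
            - (1/γ)*lam*(‖u (k+1) - u k‖*‖v k - u k‖)
          = ((1-γ*μ)*‖u (k+1) - u k‖ - lam*‖v k - u k‖)^2/(2*γ*(1-γ*μ)) := by
        field_simp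
        ring
      have hpos : 0 ≤ ((1-γ*μ)*‖u (k+1) - u k‖ - lam*‖v k - u k‖)^2/(2*γ*(1-γ*μ)) := by
        apply div_nonneg (sq_nonneg _)
        nlinarith
      linarith
    have hnorm : ‖u k - v k‖ = ‖v k - u k‖ := norm_sub_rev _ _
    have hκeq : κ*‖u k - v k‖^2
        = (1/γ)*lam*‖v k - u k‖^2 - lam^2/(2*γ*(1-γ*μ))*‖v k - u k‖^2 := by
      rw [hnorm, hκ]; ring
    simp only [hΦ]
    linarith [i1, i2, e1, e2, id1, id2, amgm, hκeq]
  -- summability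
  have tel : ∀ n, ∑ k ∈ Finset.range n, κ * ‖u k - v k‖^2 + Φ n ≤ Φ 0 := by
    intro n
    induction n with
    | zero => simp
    | succ n ih =>
      rw [Finset.sum_range_succ]
      have := hdesc n
      linarith
  have hsum' : Summable (fun k => κ * ‖u k - v k‖^2) := by
    apply summable_of_sum_range_le (c := Φ 0 - cl) (fun n => by positivity)
    intro n
    have := tel n
    have := hlow n
    linarith
  have hsum : Summable (fun k => ‖u k - v k‖^2) := by
    have h2 := hsum'.mul_left κ⁻¹
    have : (fun k => κ⁻¹ * (κ * ‖u k - v k‖^2)) = fun k => ‖u k - v k‖^2 := by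
      funext k
      rw [← mul_assoc, inv_mul_cancel₀ hκpos.ne', one_mul]
    rwa [this] at h2
  exact ⟨hsum, min_o (fun n => ‖u n - v n‖^2) (fun n => by positivity) hsum⟩
end
end
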